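/- arXiv:1001.4777 — 4 statements merged into one kernel-verified Lean document; each statement's English description precedes it below -/
import Mathlib

section
/- Let A be a Dedekind domain, let H be a commutative Hopf algebra over A that is flat as an A-module, and let V be a flat A-module equipped with a right H-comodule structure, i.e. an A-linear map ρ : V → V ⊗[A] H that is counital ((id_V ⊗ counit) ∘ ρ equals the canonical isomorphism V ≅ V ⊗[A] A followed by identity) and coassociative ((ρ ⊗ id_H) ∘ ρ = (id_V ⊗ comul) ∘ ρ after the canonical identification (V ⊗ H) ⊗ H ≅ V ⊗ (H ⊗ H)). Then every finitely generated A-submodule W₀ of V is contained in an A-submodule U of V such that U is finitely generated and projective over A, and U is a subcomodule of V, i.e. ρ maps U into the image of the canonical map U ⊗[A] H → V ⊗[A] H induced by the inclusion U ⊆ V. -/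
open TensorProduct

section Aux

variable {A : Type*} [CommRing A]

/-- Flat modules over a domain are torsion-free. -/
lemma aux_noZeroSMulDivisors_of_flat [IsDomain A] (M : Type*) [AddCommGroup M] [Module A M]
    [Module.Flat A M] : NoZeroSMulDivisors A M := by
  refine ⟨fun {r m} h => ?_⟩
  by_cases hr : r = 0
  · exact Or.inl hr
  refine Or.inr ?_
  have hinj : Function.Injective (LinearMap.lsmul A A r) := by
    intro x y hxy
    have : r * x = r * y := by simpa [LinearMap.lsmul_apply, smul_eq_mul] using hxy
    exact mul_left_cancel₀ hr this
  have h2 : Function.Injective (LinearMap.rTensor M (LinearMap.lsmul A A r)) :=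
    Module.Flat.rTensor_preserves_injective_linearMap _ hinj
  have h3 : (LinearMap.rTensor M (LinearMap.lsmul A A r)) ((1 : A) ⊗ₜ[A] m) = 0 := by
    rw [LinearMap.rTensor_tmul]
    have e1 : (LinearMap.lsmul A A r) (1 : A) = r • (1 : A) := by
      simp [LinearMap.lsmul_apply, smul_eq_mul]
    rw [e1, TensorProduct.smul_tmul, h, tmul_zero]
  have h4 : (1 : A) ⊗ₜ[A] m = 0 := h2 (by rw [h3, map_zero])
  have h5 := congrArg (TensorProduct.lid A M) h4
  simpa using h5

/-- Torsion-freeness passes to localizations at primes (over a domain). -/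
lemma aux_nzsd_localizedModule [IsDomain A] (p : Ideal A) [p.IsPrime]
    (M : Type*) [AddCommGroup M] [Module A M] [NoZeroSMulDivisors A M] :
    NoZeroSMulDivisors (Localization.AtPrime p) (LocalizedModule p.primeCompl M) := by
  refine ⟨fun {c x} h => ?_⟩
  obtain ⟨⟨r, t⟩, rfl⟩ := IsLocalization.mk'_surjective p.primeCompl c
  dsimp only at h ⊢
  by_cases hr : r = 0
  · exact Or.inl (by rw [hr, IsLocalization.mk'_zero])
  refine Or.inr ?_
  revert h
  induction x using LocalizedModule.induction_on with
  | h m s =>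
    intro h
    rw [← Localization.mk_eq_mk'_apply, LocalizedModule.mk_smul_mk] at h
    have h0 : LocalizedModule.mk (r • m) (t * s) = LocalizedModule.mk (0 : M) (1 : p.primeCompl) := by
      rw [LocalizedModule.zero_mk]; exact h
    obtain ⟨u, hu⟩ := LocalizedModule.mk_eq.mp h0
    have h1 : ((u : A) * r) • m = 0 := by
      have h2 : u • (1 : p.primeCompl) • (r • m) = 0 := by rw [hu]; simp
      rw [one_smul, Submonoid.smul_def, ← mul_smul] at h2
      exact h2
    have hu0 : (u : A) ≠ 0 := fun h0 => u.property (by rw [h0]; exact p.zero_mem)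
    have hm : m = 0 := by
      rcases smul_eq_zero.mp h1 with h2 | h2
      · exact absurd h2 (mul_ne_zero hu0 hr)
      · exact h2
    rw [hm, LocalizedModule.zero_mk]

/-- A finitely generated torsion-free module over a Dedekind domain is projective. -/
lemma aux_projective_of_fg [IsDomain A] [IsDedekindDomain A] {V : Type*} [AddCommGroup V]
    [Module A V] [NoZeroSMulDivisors A V] (U : Submodule A V) (hU : U.FG) :
    Module.Projective A ↥U := by
  haveI : Module.Finite A ↥U := Module.Finite.iff_fg.mpr hU
  haveI : Module.FinitePresentation A ↥U := Module.finitePresentation_of_finite A ↥U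
  apply Module.projective_of_localization_maximal
  intro p hp
  haveI : p.IsPrime := hp.isPrime
  haveI : NoZeroSMulDivisors A ↥U := ⟨fun {r m} h => by
    rcases eq_zero_or_eq_zero_of_smul_eq_zero (congrArg Subtype.val h : r • (m : V) = 0) with h | h
    · exact Or.inl h
    · exact Or.inr (Subtype.ext h)⟩
  haveI : NoZeroSMulDivisors (Localization.AtPrime p) (LocalizedModule p.primeCompl ↥U) :=
    aux_nzsd_localizedModule p ↥U
  haveI : Module.Free (Localization.AtPrime p) (LocalizedModule p.primeCompl ↥U) :=
    Module.free_of_finite_type_torsion_free'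
  exact Module.Projective.of_free

end Aux

/-- Over a Dedekind domain `A`, let `H` be a flat commutative Hopf
`A`-algebra and `V` a flat `A`-module with a right `H`-comodule structure `ρ`.
Then every finitely generated submodule of `V` is contained in a finitely generated
projective subcomodule of `V`. -/
theorem flat_comodule_union_of_fg_projective_subcomodules
    (A : Type*) [CommRing A] [IsDomain A] [IsDedekindDomain A]
    (H : Type*) [CommRing H] [HopfAlgebra A H] [Module.Flat A H]
    (V : Type*) [AddCommGroup V] [Module A V] [Module.Flat A V]
    (ρ : V →ₗ[A] V ⊗[A] H)
    (hcounit : ∀ v : V,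
      (TensorProduct.rid A V)
        ((LinearMap.lTensor V (Coalgebra.counit (R := A) (A := H))) (ρ v)) = v)
    (hcoassoc :
      (TensorProduct.assoc A V H H).toLinearMap ∘ₗ (LinearMap.rTensor H ρ) ∘ₗ ρ
        = (LinearMap.lTensor V (Coalgebra.comul (R := A) (A := H))) ∘ₗ ρ)
    (W₀ : Submodule A V) (hW₀ : W₀.FG) :
    ∃ U : Submodule A V, W₀ ≤ U ∧ U.FG ∧ Module.Projective A U ∧
      ∀ u ∈ U, ρ u ∈ LinearMap.range (LinearMap.rTensor H U.subtype) := by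
  classical
  -- monotonicity of ranges of `rTensor H ∘ subtype`
  have hmono : ∀ (P P' : Submodule A V), P ≤ P' →
      LinearMap.range (LinearMap.rTensor H P.subtype) ≤
        LinearMap.range (LinearMap.rTensor H P'.subtype) := by
    intro P P' hPP'
    have hcomp : P'.subtype ∘ₗ Submodule.inclusion hPP' = P.subtype := by
      ext x; rfl
    rw [← hcomp, LinearMap.rTensor_comp]
    exact LinearMap.range_comp_le_range _ _
  -- every element of `V ⊗ H` lies in the image of `P ⊗ H` for some fg `P`
  have hexists : ∀ x : V ⊗[A] H, ∃ P : Submodule A V, P.FG ∧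
      x ∈ LinearMap.range (LinearMap.rTensor H P.subtype) := by
    intro x
    induction x using TensorProduct.induction_on with
    | zero => exact ⟨⊥, Submodule.fg_bot, Submodule.zero_mem _⟩
    | tmul v h =>
        refine ⟨Submodule.span A {v}, Submodule.fg_span_singleton v, ?_⟩
        exact ⟨⟨v, Submodule.mem_span_singleton_self v⟩ ⊗ₜ h, rfl⟩
    | add x y hx hy =>
        obtain ⟨P₁, h₁, hx₁⟩ := hx
        obtain ⟨P₂, h₂, hy₂⟩ := hy
        exact ⟨P₁ ⊔ P₂, h₁.sup h₂, Submodule.add_mem _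
          (hmono _ _ le_sup_left hx₁) (hmono _ _ le_sup_right hy₂)⟩
  choose P hPfg hPmem using fun w : V => hexists (ρ w)
  obtain ⟨s, hs⟩ := hW₀
  have hW₀fg : W₀.FG := ⟨s, hs⟩
  have hsupfg : ∀ t : Finset V, (t.sup P).FG := by
    intro t
    induction t using Finset.cons_induction with
    | empty => simpa using Submodule.fg_bot
    | cons a t ha ih => rw [Finset.sup_cons]; exact (hPfg a).sup ih
  set L : Submodule A V := W₀ ⊔ s.sup P with hL
  have hLfg : L.FG := hW₀fg.sup (hsupfg s)
  set N : Submodule A (V ⊗[A] H) := LinearMap.range (LinearMap.rTensor H L.subtype) with hN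
  have hρW₀ : ∀ w ∈ W₀, ρ w ∈ N := by
    intro w hw
    have hle : W₀ ≤ Submodule.comap ρ N := by
      rw [← hs, Submodule.span_le]
      intro a ha
      have : ρ a ∈ N := hmono (P a) L (le_trans (Finset.le_sup ha) le_sup_right) (hPmem a)
      exact this
    exact hle hw
  set g : ↥L →ₗ[A] (V ⊗[A] H) ⧸ N := N.mkQ ∘ₗ ρ ∘ₗ L.subtype with hg
  set U : Submodule A V := (LinearMap.ker g).map L.subtype with hU
  refine ⟨U, ?_, ?_, ?_, ?_⟩
  · -- W₀ ≤ U
    intro w hw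
    have hwL : w ∈ L := (le_sup_left : W₀ ≤ L) hw
    refine Submodule.mem_map.mpr ⟨⟨w, hwL⟩, ?_, rfl⟩
    rw [LinearMap.mem_ker, hg, LinearMap.comp_apply, LinearMap.comp_apply,
      Submodule.mkQ_apply, Submodule.Quotient.mk_eq_zero]
    exact hρW₀ w hw
  · -- U is fg
    haveI := isNoetherian_of_fg_of_noetherian L hLfg
    exact (IsNoetherian.noetherian (LinearMap.ker g)).map _
  · -- U is projective
    haveI : NoZeroSMulDivisors A V := aux_noZeroSMulDivisors_of_flat V
    haveI := isNoetherian_of_fg_of_noetherian L hLfg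
    exact aux_projective_of_fg U ((IsNoetherian.noetherian (LinearMap.ker g)).map _)
  · -- U is a subcomodule
    rintro u hu
    obtain ⟨l, hl, rfl⟩ := Submodule.mem_map.mp hu
    have hρN : ρ (L.subtype l) ∈ N := by
      have h0 := hl
      rw [LinearMap.mem_ker, hg, LinearMap.comp_apply, LinearMap.comp_apply,
        Submodule.mkQ_apply, Submodule.Quotient.mk_eq_zero] at h0
      exact h0
    obtain ⟨y, hy⟩ := hρN
    -- `rTensor H g y = 0`
    have lemC : ∀ x ∈ N, (TensorProduct.assoc A V H H).symm
        ((LinearMap.lTensor V (Coalgebra.comul (R := A) (A := H))) x)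
        ∈ LinearMap.range (LinearMap.rTensor H N.subtype) := by
      rintro x ⟨z, rfl⟩
      induction z using TensorProduct.induction_on with
      | zero => simpa using Submodule.zero_mem _
      | tmul l' h' =>
          rw [LinearMap.rTensor_tmul, LinearMap.lTensor_tmul]
          have lemC2 : ∀ w : H ⊗[A] H, (TensorProduct.assoc A V H H).symm
              ((L.subtype l') ⊗ₜ w)
              ∈ LinearMap.range (LinearMap.rTensor H N.subtype) := by
            intro w
            induction w using TensorProduct.induction_on with
            | zero => simpa using Submodule.zero_mem _
            | tmul h₁ h₂ =>
                rw [TensorProduct.assoc_symm_tmul]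
                refine ⟨(⟨(L.subtype l') ⊗ₜ h₁, ⟨l' ⊗ₜ h₁, rfl⟩⟩ : ↥N) ⊗ₜ h₂, rfl⟩
            | add w₁ w₂ hw₁ hw₂ =>
                rw [tmul_add, map_add]
                exact Submodule.add_mem _ hw₁ hw₂
          exact lemC2 _
      | add z₁ z₂ h₁ h₂ =>
          rw [map_add, map_add, map_add]
          exact Submodule.add_mem _ h₁ h₂
    have hgy : LinearMap.rTensor H g y = 0 := by
      have e1 : LinearMap.rTensor H g = (LinearMap.rTensor H N.mkQ) ∘ₗ
          ((LinearMap.rTensor H ρ) ∘ₗ (LinearMap.rTensor H L.subtype)) := by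
        rw [hg, ← LinearMap.rTensor_comp, ← LinearMap.rTensor_comp]
      rw [e1, LinearMap.comp_apply, LinearMap.comp_apply, hy]
      have e2 : LinearMap.rTensor H ρ (ρ (L.subtype l)) = (TensorProduct.assoc A V H H).symm
          ((LinearMap.lTensor V (Coalgebra.comul (R := A) (A := H))) (ρ (L.subtype l))) := by
        have h3 := DFunLike.congr_fun hcoassoc (L.subtype l)
        simp only [LinearMap.comp_apply, LinearEquiv.coe_coe] at h3
        exact (LinearEquiv.eq_symm_apply _).mpr h3
      rw [e2]
      obtain ⟨t, ht⟩ := lemC _ ⟨y, hy⟩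
      rw [← ht, ← LinearMap.comp_apply, ← LinearMap.rTensor_comp]
      have e3 : N.mkQ ∘ₗ N.subtype = 0 := by
        ext x
        simp [Submodule.Quotient.mk_eq_zero]
      rw [e3, LinearMap.rTensor_zero, LinearMap.zero_apply]
    set g₀ := g.rangeRestrict with hg₀
    have hexact : Function.Exact ((LinearMap.ker g).subtype) g₀ := by
      rw [LinearMap.exact_iff, LinearMap.ker_rangeRestrict, Submodule.range_subtype]
    have hexactT : Function.Exact (LinearMap.rTensor H (LinearMap.ker g).subtype)
        (LinearMap.rTensor H g₀) :=
      rTensor_exact H hexact g.surjective_rangeRestrict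
    have hg₀y : LinearMap.rTensor H g₀ y = 0 := by
      have hinj : Function.Injective (LinearMap.rTensor H (LinearMap.range g).subtype) :=
        Module.Flat.rTensor_preserves_injective_linearMap _ (Submodule.injective_subtype _)
      apply hinj
      rw [map_zero, ← LinearMap.comp_apply, ← LinearMap.rTensor_comp]
      have e4 : (LinearMap.range g).subtype ∘ₗ g₀ = g :=
        g.subtype_comp_codRestrict _ _
      rw [e4, hgy]
    obtain ⟨x, hx⟩ := (hexactT y).mp hg₀y
    -- conclude
    have hmem : ∀ c : ↥(LinearMap.ker g), (L.subtype ∘ₗ (LinearMap.ker g).subtype) c ∈ U :=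
      fun c => Submodule.mem_map.mpr ⟨(c : ↥L), c.property, rfl⟩
    set e : ↥(LinearMap.ker g) →ₗ[A] ↥U :=
      LinearMap.codRestrict U (L.subtype ∘ₗ (LinearMap.ker g).subtype) hmem with he
    refine ⟨LinearMap.rTensor H e x, ?_⟩
    have e5 : U.subtype ∘ₗ e = L.subtype ∘ₗ (LinearMap.ker g).subtype :=
      LinearMap.subtype_comp_codRestrict _ _ _
    calc LinearMap.rTensor H U.subtype (LinearMap.rTensor H e x)
        = LinearMap.rTensor H (U.subtype ∘ₗ e) x := by
          rw [LinearMap.rTensor_comp, LinearMap.comp_apply]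
      _ = LinearMap.rTensor H (L.subtype ∘ₗ (LinearMap.ker g).subtype) x := by rw [e5]
      _ = LinearMap.rTensor H L.subtype (LinearMap.rTensor H (LinearMap.ker g).subtype x) := by
          rw [LinearMap.rTensor_comp, LinearMap.comp_apply]
      _ = LinearMap.rTensor H L.subtype y := by rw [hx]
      _ = ρ (L.subtype l) := hy
end

section
/- Let A be a principal ideal domain, and let H be a commutative Hopf algebra over A that is flat as an A-module and finitely generated as an A-algebra. Then there exist an integer n ≥ 1 and a right H-comodule structure ρ : A^n → A^n ⊗[A] H (A-linear, counital, coassociative) such that, writing ρ(e_j) = Σ_{i=1}^n e_i ⊗ a_{ij} in terms of the standard basis (e_1, …, e_n) of A^n, the determinant det(a_{ij}) of the matrix (a_{ij}) ∈ Matrix(n, n, H) is a unit of H, and H is generated as an A-algebra by the matrix coefficients a_{ij} (1 ≤ i, j ≤ n) together with the inverse of det(a_{ij}). -/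
open TensorProduct LinearMap

section PiComp

variable (A : Type*) [CommRing A] (n : ℕ) (M : Type*) [AddCommGroup M] [Module A M]

/-- The componentwise description of `(Fin n → A) ⊗[A] M`. -/
noncomputable def piComp : ((Fin n → A) ⊗[A] M) →ₗ[A] (Fin n → M) :=
  LinearMap.pi fun i => TensorProduct.lift ((LinearMap.lsmul A M).comp (LinearMap.proj i))

variable {A n M}

@[simp] lemma piComp_tmul (v : Fin n → A) (m : M) (i : Fin n) :
    piComp A n M (v ⊗ₜ[A] m) i = v i • m := rfl

lemma piComp_sum_single (u : Fin n → M) :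
    piComp A n M (∑ j, Pi.single j (1 : A) ⊗ₜ[A] u j) = u := by
  ext i
  rw [map_sum]
  simp [Finset.sum_apply, Pi.single_apply]

lemma eq_sum_single_piComp (x : (Fin n → A) ⊗[A] M) :
    x = ∑ i, Pi.single i (1 : A) ⊗ₜ[A] piComp A n M x i := by
  induction x using TensorProduct.induction_on with
  | zero => simp
  | tmul v m =>
      have : ∀ i : Fin n, (Pi.single i (1 : A) : Fin n → A) ⊗ₜ[A] (v i • m)
          = (Pi.single i (v i) : Fin n → A) ⊗ₜ[A] m := by
        intro i
        have h1 : (Pi.single i (v i) : Fin n → A) = v i • (Pi.single i (1 : A) : Fin n → A) := by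
          ext j
          by_cases h : j = i <;> simp [Pi.single_apply, h]
        rw [h1, smul_tmul]
      simp only [piComp_tmul, this, ← sum_tmul, Finset.univ_sum_single]
  | add x y hx hy =>
      conv_lhs => rw [hx, hy]
      simp [map_add, tmul_add, Finset.sum_add_distrib]

lemma piComp_eq_iff {x y : (Fin n → A) ⊗[A] M} (h : piComp A n M x = piComp A n M y) :
    x = y := by
  rw [eq_sum_single_piComp x, eq_sum_single_piComp y, h]

lemma pi_eq_sum_single_smul {A : Type*} [CommRing A] {n : ℕ} (y : Fin n → A) :
    y = ∑ j, y j • (Pi.single j (1 : A) : Fin n → A) := by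
  ext i
  simp [Finset.sum_apply, Pi.single_apply]

end PiComp

lemma flat_noZeroSMulDivisors (A M : Type*) [CommRing A] [IsDomain A] [AddCommGroup M]
    [Module A M] [Module.Flat A M] : NoZeroSMulDivisors A M := by
  constructor
  intro c x h
  rcases eq_or_ne c 0 with hc | hc
  · exact Or.inl hc
  · right
    have hf : Function.Injective (LinearMap.toSpanSingleton A A c) := by
      intro r s hrs
      simpa [LinearMap.toSpanSingleton_apply, smul_eq_mul] using
        mul_left_cancel₀ hc (by simpa [LinearMap.toSpanSingleton_apply, smul_eq_mul,
          mul_comm] using hrs)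
    have hinj : Function.Injective ((LinearMap.toSpanSingleton A A c).rTensor M) :=
      Module.Flat.rTensor_preserves_injective_linearMap _ hf
    have h0 : (LinearMap.toSpanSingleton A A c).rTensor M ((1 : A) ⊗ₜ[A] x) = 0 := by
      have : (LinearMap.toSpanSingleton A A c).rTensor M ((1 : A) ⊗ₜ[A] x) = c ⊗ₜ[A] x := by
        simp [LinearMap.rTensor_tmul, LinearMap.toSpanSingleton_apply]
      rw [this]
      have h2 : c ⊗ₜ[A] x = (1 : A) ⊗ₜ[A] (c • x) := by
        rw [tmul_smul, smul_tmul', smul_eq_mul, mul_one]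
      rw [h2, h, tmul_zero]
    have h1 : (1 : A) ⊗ₜ[A] x = (0 : A ⊗[A] M) := by
      apply hinj
      rw [h0, map_zero]
    have := congrArg (TensorProduct.lid A M) h1
    simpa using this

set_option maxHeartbeats 1000000 in
set_option synthInstance.maxHeartbeats 400000 in
/-- Over a PID `A`, a flat commutative Hopf `A`-algebra `H` of finite type
admits a faithful finite free comodule: there are `n ≥ 1` and a right `H`-comodule structure
`ρ` on `A^n` such that, writing `ρ (e j) = ∑ i, e i ⊗ a i j`, the determinant of the matrix
`a` is a unit of `H`, and `H` is generated as an `A`-algebra by the matrix coefficients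
`a i j` together with the inverse of `det a`. -/
theorem exists_closed_embedding_into_GL
    (A : Type*) [CommRing A] [IsDomain A] [IsPrincipalIdealRing A]
    (H : Type*) [CommRing H] [HopfAlgebra A H] [Module.Flat A H]
    (hfg : Algebra.FiniteType A H) :
    ∃ (n : ℕ) (_ : 1 ≤ n) (ρ : (Fin n → A) →ₗ[A] (Fin n → A) ⊗[A] H)
      (a : Matrix (Fin n) (Fin n) H) (d : H),
      (∀ v : Fin n → A,
        (TensorProduct.rid A (Fin n → A))
          ((LinearMap.lTensor (Fin n → A) (Coalgebra.counit (R := A) (A := H))) (ρ v)) = v) ∧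
      ((TensorProduct.assoc A (Fin n → A) H H).toLinearMap ∘ₗ (LinearMap.rTensor H ρ) ∘ₗ ρ
        = (LinearMap.lTensor (Fin n → A) (Coalgebra.comul (R := A) (A := H))) ∘ₗ ρ) ∧
      (∀ j : Fin n, ρ (Pi.single j 1) = ∑ i : Fin n, Pi.single i (1 : A) ⊗ₜ[A] a i j) ∧
      IsUnit a.det ∧
      a.det * d = 1 ∧
      Algebra.adjoin A ((Set.range fun p : Fin n × Fin n => a p.1 p.2) ∪ {d}) = ⊤ := by
  classical
  obtain ⟨S, hS⟩ := hfg.out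
  haveI : NoZeroSMulDivisors A H := flat_noZeroSMulDivisors A H
  -- Step 1: a finitely generated free subcomodule of `H` containing `S` and `1`.
  let F : H → Finset (H × H) := fun x =>
    (TensorProduct.exists_finset (R := A) (Coalgebra.comul x)).choose
  have hF : ∀ x : H, Coalgebra.comul (R := A) x = ∑ p ∈ F x, p.1 ⊗ₜ[A] p.2 := fun x =>
    (TensorProduct.exists_finset (R := A) (Coalgebra.comul x)).choose_spec
  let T : Finset H := insert 1 S
  let NF : Finset H := T ∪ T.biUnion fun x => (F x).image Prod.fst
  let N : Submodule A H := Submodule.span A ↑NF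
  have hNfg : N.FG := ⟨NF, rfl⟩
  let g : H →ₗ[A] ((H ⧸ N) ⊗[A] H) := (N.mkQ.rTensor H) ∘ₗ Coalgebra.comul
  have hexact1 : Function.Exact (N.subtype.rTensor H) (N.mkQ.rTensor H) :=
    rTensor_exact (R := A) H (LinearMap.exact_subtype_mkQ N) (Submodule.mkQ_surjective N)
  have hTg : ∀ x ∈ T, g x = 0 := by
    intro x hx
    have hmem : ∀ p ∈ F x, p.1 ∈ N := fun p hp => Submodule.subset_span
      (Finset.mem_coe.2 (Finset.mem_union_right _
        (Finset.mem_biUnion.2 ⟨x, hx, Finset.mem_image_of_mem _ hp⟩)))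
    have hx1 : Coalgebra.comul (R := A) x ∈ LinearMap.range (N.subtype.rTensor H) := by
      rw [hF x]
      refine Submodule.sum_mem _ fun p hp => ⟨(⟨p.1, hmem p hp⟩ : N) ⊗ₜ[A] p.2, by
        simp [LinearMap.rTensor_tmul]⟩
    exact (hexact1 (Coalgebra.comul (R := A) x)).mpr (by simpa using hx1)
  set V : Submodule A H := LinearMap.ker g with hV
  have hTV : ∀ x ∈ T, x ∈ V := fun x hx => LinearMap.mem_ker.2 (hTg x hx)
  have hVN : V ≤ N := by
    intro v hv
    have h1 : Coalgebra.comul (R := A) v ∈ Set.range (N.subtype.rTensor H) :=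
      (hexact1 _).mp (LinearMap.mem_ker.1 hv)
    obtain ⟨t, ht⟩ := h1
    have key : ∀ t : N ⊗[A] H,
        (TensorProduct.rid A H)
            ((Coalgebra.counit (R := A) (A := H)).lTensor H ((N.subtype.rTensor H) t))
          = N.subtype ((TensorProduct.rid A N)
            ((Coalgebra.counit (R := A) (A := H)).lTensor N t)) := by
      intro t
      induction t using TensorProduct.induction_on with
      | zero => simp
      | tmul y h =>
          simp [LinearMap.rTensor_tmul, LinearMap.lTensor_tmul, TensorProduct.rid_tmul]
      | add x y hx hy => simp only [map_add, hx, hy]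
    have hv2 : v = (TensorProduct.rid A H)
        ((Coalgebra.counit (R := A) (A := H)).lTensor H (Coalgebra.comul (R := A) v)) := by
      rw [Coalgebra.lTensor_counit_comul, TensorProduct.rid_tmul, one_smul]
    rw [hv2, ← ht, key]
    exact Submodule.coe_mem _
  have hVfg : V.FG := by
    haveI := isNoetherian_of_fg_of_noetherian N hNfg
    have h1 : (V.comap N.subtype).FG := IsNoetherian.noetherian _
    have h2 : (V.comap N.subtype).map N.subtype = V := by
      rw [Submodule.map_comap_subtype]
      exact inf_eq_right.mpr hVN
    rw [← h2]
    exact h1.map _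
  -- the subcomodule property
  have hexact2 : Function.Exact (V.subtype.rTensor H) (g.rTensor H) :=
    Module.Flat.rTensor_exact H (LinearMap.exact_subtype_ker_map g)
  have hΔV : ∀ v ∈ V, Coalgebra.comul (R := A) v ∈ Set.range (V.subtype.rTensor H) := by
    intro v hv
    apply (hexact2 _).mp
    have e1 : (g.rTensor H)
        = ((N.mkQ.rTensor H).rTensor H) ∘ₗ ((Coalgebra.comul (R := A) (A := H)).rTensor H) :=
      LinearMap.rTensor_comp H (N.mkQ.rTensor H) (Coalgebra.comul (R := A) (A := H))
    rw [e1]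
    simp only [LinearMap.comp_apply]
    rw [show (Coalgebra.comul (R := A) (A := H)).rTensor H (Coalgebra.comul (R := A) v)
        = (TensorProduct.assoc A H H H).symm
            ((Coalgebra.comul (R := A) (A := H)).lTensor H (Coalgebra.comul (R := A) v)) from
      (Coalgebra.coassoc_symm_apply v).symm]
    have e2 : ∀ w : H ⊗[A] (H ⊗[A] H),
        ((N.mkQ.rTensor H).rTensor H) ((TensorProduct.assoc A H H H).symm w)
          = (TensorProduct.assoc A (H ⧸ N) H H).symm ((N.mkQ.rTensor (H ⊗[A] H)) w) := by
      intro w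
      have h3 := TensorProduct.map_map_assoc_symm (N.mkQ) (LinearMap.id (R := A) (M := H))
        (LinearMap.id (R := A) (M := H)) w
      simpa [LinearMap.rTensor, TensorProduct.map_id] using h3
    rw [e2]
    have e3 : (N.mkQ.rTensor (H ⊗[A] H))
        ((Coalgebra.comul (R := A) (A := H)).lTensor H (Coalgebra.comul (R := A) v))
        = (Coalgebra.comul (R := A) (A := H)).lTensor (H ⧸ N)
            ((N.mkQ.rTensor H) (Coalgebra.comul (R := A) v)) := by
      have h4 := LinearMap.rTensor_comp_lTensor (R := A) (f := N.mkQ)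
        (g := Coalgebra.comul (R := A) (A := H))
      have h5 := LinearMap.lTensor_comp_rTensor (R := A) (f := N.mkQ)
        (g := Coalgebra.comul (R := A) (A := H))
      calc (N.mkQ.rTensor (H ⊗[A] H))
            ((Coalgebra.comul (R := A) (A := H)).lTensor H (Coalgebra.comul (R := A) v))
          = TensorProduct.map N.mkQ (Coalgebra.comul (R := A) (A := H))
              (Coalgebra.comul (R := A) v) := by
            rw [← h4]; rfl
        _ = _ := by rw [← h5]; rfl
    rw [e3]
    have hgv : (N.mkQ.rTensor H) (Coalgebra.comul (R := A) v) = 0 := LinearMap.mem_ker.1 hv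
    rw [hgv, map_zero, map_zero]
  -- Step 2: basis
  haveI : Module.Finite A V := Module.Finite.iff_fg.2 hVfg
  haveI : Module.Free A V := Module.free_of_finite_type_torsion_free'
  set n : ℕ := Module.finrank A V with hn
  have h1V : (1 : H) ∈ V := hTV 1 (Finset.mem_insert_self 1 S)
  have h1ne : (1 : H) ≠ 0 := by
    intro h
    have := congrArg (Coalgebra.counit (R := A)) h
    rw [Bialgebra.counit_one, map_zero] at this
    exact one_ne_zero this
  have hne : Nontrivial V := ⟨⟨⟨1, h1V⟩, 0, by simpa [Subtype.ext_iff] using h1ne⟩⟩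
  have hn1 : 1 ≤ n := by
    have : 0 < n := Module.finrank_pos_iff.mpr hne
    omega
  let b : Module.Basis (Fin n) A V := Module.finBasis A V
  let ι : (Fin n → A) →ₗ[A] H := V.subtype ∘ₗ (b.equivFun.symm : (Fin n → A) →ₗ[A] V)
  have hι : Function.Injective ι := by
    have h1 : Function.Injective (V.subtype) := Submodule.injective_subtype V
    exact h1.comp b.equivFun.symm.injective
  have hι_range : ∀ x, ι x ∈ V := fun x => Submodule.coe_mem (b.equivFun.symm x)
  -- Step 3: the coaction on `Fin n → A`
  let Φ : ((Fin n → A) ⊗[A] H) →ₗ[A] H ⊗[A] H := ι.rTensor H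
  have hΦ : Function.Injective Φ :=
    Module.Flat.rTensor_preserves_injective_linearMap ι hι
  have hrange : ∀ x : Fin n → A, Coalgebra.comul (R := A) (ι x) ∈ LinearMap.range Φ := by
    intro x
    obtain ⟨t, ht⟩ := hΔV (ι x) (hι_range x)
    refine ⟨((b.equivFun.toLinearMap : V →ₗ[A] (Fin n → A)).rTensor H) t, ?_⟩
    have hcomp : ι ∘ₗ (b.equivFun.toLinearMap : V →ₗ[A] (Fin n → A)) = V.subtype := by
      apply LinearMap.ext
      intro v
      show V.subtype (b.equivFun.symm (b.equivFun v)) = V.subtype v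
      rw [LinearEquiv.symm_apply_apply]
    calc Φ (((b.equivFun.toLinearMap : V →ₗ[A] (Fin n → A)).rTensor H) t)
        = ((ι ∘ₗ (b.equivFun.toLinearMap : V →ₗ[A] (Fin n → A))).rTensor H) t := by
          rw [LinearMap.rTensor_comp]; rfl
      _ = (V.subtype.rTensor H) t := by rw [hcomp]
      _ = _ := ht
  let eΦ : ((Fin n → A) ⊗[A] H) ≃ₗ[A] LinearMap.range Φ := LinearEquiv.ofInjective Φ hΦ
  let ρ : (Fin n → A) →ₗ[A] (Fin n → A) ⊗[A] H :=
    (eΦ.symm : LinearMap.range Φ →ₗ[A] (Fin n → A) ⊗[A] H) ∘ₗ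
      LinearMap.codRestrict (LinearMap.range Φ) (Coalgebra.comul ∘ₗ ι) hrange
  have hρ : ∀ x : Fin n → A, Φ (ρ x) = Coalgebra.comul (ι x) := by
    intro x
    show Φ (eΦ.symm _) = _
    have : ∀ y : LinearMap.range Φ, Φ (eΦ.symm y) = (y : H ⊗[A] H) := by
      intro y
      conv_rhs => rw [← eΦ.apply_symm_apply y]
      rfl
    rw [this]
    rfl
  -- counit axiom
  have hcounit : ∀ v : Fin n → A,
      (TensorProduct.rid A (Fin n → A))
        ((LinearMap.lTensor (Fin n → A) (Coalgebra.counit (R := A) (A := H))) (ρ v)) = v := by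
    intro v
    apply hι
    have key : ∀ y : (Fin n → A) ⊗[A] H,
        ι ((TensorProduct.rid A (Fin n → A))
            ((Coalgebra.counit (R := A) (A := H)).lTensor (Fin n → A) y))
          = (TensorProduct.rid A H) ((Coalgebra.counit (R := A) (A := H)).lTensor H (Φ y)) := by
      intro y
      induction y using TensorProduct.induction_on with
      | zero => simp only [map_zero]
      | tmul w h =>
          have hΦt : Φ (w ⊗ₜ[A] h) = ι w ⊗ₜ[A] h := rfl
          simp [hΦt, LinearMap.lTensor_tmul, TensorProduct.rid_tmul, map_smul]
      | add y z hy hz => simp only [map_add, hy, hz]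
    rw [key, hρ, Coalgebra.lTensor_counit_comul, TensorProduct.rid_tmul, one_smul]
  -- coassociativity
  have hcoassoc : (TensorProduct.assoc A (Fin n → A) H H).toLinearMap ∘ₗ
      (LinearMap.rTensor H ρ) ∘ₗ ρ
      = (LinearMap.lTensor (Fin n → A) (Coalgebra.comul (R := A) (A := H))) ∘ₗ ρ := by
    apply LinearMap.ext
    intro x
    have hΨ : Function.Injective (ι.rTensor (H ⊗[A] H)) :=
      Module.Flat.rTensor_preserves_injective_linearMap ι hι
    simp only [LinearMap.comp_apply, LinearEquiv.coe_coe]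
    apply hΨ
    have hD1 : ∀ z : ((Fin n → A) ⊗[A] H) ⊗[A] H,
        (ι.rTensor (H ⊗[A] H)) ((TensorProduct.assoc A (Fin n → A) H H) z)
          = (TensorProduct.assoc A H H H) ((Φ.rTensor H) z) := by
      intro z
      have h6 := TensorProduct.map_map_assoc ι (LinearMap.id (R := A) (M := H))
        (LinearMap.id (R := A) (M := H)) z
      simpa [Φ, LinearMap.rTensor, TensorProduct.map_id] using h6
    have hΦρ : Φ ∘ₗ ρ = (Coalgebra.comul (R := A) (A := H)) ∘ₗ ι := LinearMap.ext hρ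
    have hD2 : (Φ.rTensor H) ((ρ.rTensor H) (ρ x))
        = (Coalgebra.comul (R := A) (A := H)).rTensor H (Φ (ρ x)) := by
      have h7 : (Φ.rTensor H) ∘ₗ (ρ.rTensor H)
          = ((Coalgebra.comul (R := A) (A := H)).rTensor H) ∘ₗ (ι.rTensor H) := by
        rw [← LinearMap.rTensor_comp, ← LinearMap.rTensor_comp, hΦρ]
      exact LinearMap.congr_fun h7 (ρ x)
    have hD3 : ∀ y : (Fin n → A) ⊗[A] H,
        (ι.rTensor (H ⊗[A] H)) ((Coalgebra.comul (R := A) (A := H)).lTensor (Fin n → A) y)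
          = (Coalgebra.comul (R := A) (A := H)).lTensor H (Φ y) := by
      intro y
      induction y using TensorProduct.induction_on with
      | zero => simp only [map_zero]
      | tmul w h =>
          have hΦt : Φ (w ⊗ₜ[A] h) = ι w ⊗ₜ[A] h := rfl
          simp [hΦt, LinearMap.lTensor_tmul, LinearMap.rTensor_tmul]
      | add y z hy hz => simp only [map_add, hy, hz]
    rw [hD1, hD2, hρ, hD3, hρ]
    exact Coalgebra.coassoc_apply (ι x)
  -- Step 4: the matrix
  let a : Matrix (Fin n) (Fin n) H := fun i j => piComp A n H (ρ (Pi.single j 1)) i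
  have ha : ∀ j : Fin n, ρ (Pi.single j 1) = ∑ i : Fin n, Pi.single i (1 : A) ⊗ₜ[A] a i j :=
    fun j => eq_sum_single_piComp _
  -- comultiplication of the matrix coefficients
  have hacomul : ∀ k j : Fin n,
      Coalgebra.comul (R := A) (a k j) = ∑ i, a k i ⊗ₜ[A] a i j := by
    intro k j
    have h1 := LinearMap.congr_fun hcoassoc (Pi.single j 1)
    simp only [LinearMap.comp_apply, LinearEquiv.coe_coe] at h1
    rw [ha j] at h1
    have hL : (TensorProduct.assoc A (Fin n → A) H H)
        ((LinearMap.rTensor H ρ) (∑ i, (Pi.single i (1 : A) : Fin n → A) ⊗ₜ[A] a i j))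
        = ∑ i, ∑ m, (Pi.single m (1 : A) : Fin n → A) ⊗ₜ[A] (a m i ⊗ₜ[A] a i j) := by
      rw [map_sum, map_sum]
      refine Finset.sum_congr rfl fun i _ => ?_
      rw [LinearMap.rTensor_tmul, ha i, sum_tmul, map_sum]
      refine Finset.sum_congr rfl fun m _ => ?_
      rw [TensorProduct.assoc_tmul]
    have hR : (LinearMap.lTensor (Fin n → A) (Coalgebra.comul (R := A) (A := H)))
        (∑ i, (Pi.single i (1 : A) : Fin n → A) ⊗ₜ[A] a i j)
        = ∑ i, (Pi.single i (1 : A) : Fin n → A) ⊗ₜ[A] (Coalgebra.comul (R := A) (a i j)) := by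
      rw [map_sum]
      refine Finset.sum_congr rfl fun i _ => ?_
      rw [LinearMap.lTensor_tmul]
    rw [hL, hR] at h1
    rw [Finset.sum_comm] at h1
    simp only [← TensorProduct.tmul_sum] at h1
    have hL' := piComp_sum_single (A := A) (M := H ⊗[A] H)
      (fun m => ∑ i, a m i ⊗ₜ[A] a i j)
    have hR' := piComp_sum_single (A := A) (M := H ⊗[A] H)
      (fun m => Coalgebra.comul (R := A) (a m j))
    have h2 : (fun m => ∑ i, a m i ⊗ₜ[A] a i j)
        = fun m => Coalgebra.comul (R := A) (a m j) := by
      rw [← hL', ← hR', h1]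
    exact (congrFun h2 k).symm
  have hacounit : ∀ i j : Fin n,
      Coalgebra.counit (R := A) (a i j) = if i = j then (1 : A) else 0 := by
    intro i j
    have h1 := hcounit (Pi.single j 1)
    rw [ha j] at h1
    have h2 : (TensorProduct.rid A (Fin n → A))
        ((LinearMap.lTensor (Fin n → A) (Coalgebra.counit (R := A) (A := H)))
          (∑ k, (Pi.single k (1 : A) : Fin n → A) ⊗ₜ[A] a k j))
        = ∑ k, Coalgebra.counit (R := A) (a k j) • (Pi.single k (1 : A) : Fin n → A) := by
      rw [map_sum, map_sum]
      refine Finset.sum_congr rfl fun k _ => ?_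
      rw [LinearMap.lTensor_tmul, TensorProduct.rid_tmul]
    rw [h2] at h1
    have h3 := congrFun h1 i
    simpa [Finset.sum_apply, Pi.single_apply] using h3
  -- the antipode matrix is a two-sided inverse
  let sa : Matrix (Fin n) (Fin n) H := fun i j => HopfAlgebra.antipode (R := A) (a i j)
  have hsa1 : sa * a = 1 := by
    ext k j
    rw [Matrix.mul_apply, Matrix.one_apply]
    have h1 := HopfAlgebra.mul_antipode_rTensor_comul_apply (R := A) (a k j)
    rw [hacomul k j, map_sum, map_sum] at h1
    simp only [LinearMap.rTensor_tmul, LinearMap.mul'_apply] at h1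
    rw [hacounit k j] at h1
    simpa [sa, apply_ite (algebraMap A H), map_one, map_zero] using h1
  have hsa2 : a * sa = 1 := by
    ext k j
    rw [Matrix.mul_apply, Matrix.one_apply]
    have h1 := HopfAlgebra.mul_antipode_lTensor_comul_apply (R := A) (a k j)
    rw [hacomul k j, map_sum, map_sum] at h1
    simp only [LinearMap.lTensor_tmul, LinearMap.mul'_apply] at h1
    rw [hacounit k j] at h1
    simpa [sa, apply_ite (algebraMap A H), map_one, map_zero] using h1
  have hdet : a.det * sa.det = 1 := by
    rw [← Matrix.det_mul, hsa2, Matrix.det_one]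
  -- generation
  have hgen : Algebra.adjoin A
      ((Set.range fun p : Fin n × Fin n => a p.1 p.2) ∪ {sa.det}) = ⊤ := by
    set W : Subalgebra A H :=
      Algebra.adjoin A ((Set.range fun p : Fin n × Fin n => a p.1 p.2) ∪ {sa.det}) with hW
    have haW : ∀ i j : Fin n, a i j ∈ W :=
      fun i j => Algebra.subset_adjoin (Or.inl ⟨(i, j), rfl⟩)
    have hb : ∀ j : Fin n, ι (Pi.single j 1)
        = ∑ i, Coalgebra.counit (R := A) (ι (Pi.single i 1)) • a i j := by
      intro j
      have h1 : Coalgebra.comul (R := A) (ι (Pi.single j 1))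
          = ∑ i, ι (Pi.single i 1) ⊗ₜ[A] a i j := by
        rw [← hρ, ha j, map_sum]
        refine Finset.sum_congr rfl fun i _ => ?_
        rfl
      have h2 := congrArg (fun z => (TensorProduct.lid A H)
        ((Coalgebra.counit (R := A) (A := H)).rTensor H z)) h1
      simp only [Coalgebra.rTensor_counit_comul, map_sum, LinearMap.rTensor_tmul,
        TensorProduct.lid_tmul] at h2
      simpa using h2
    have hbW : ∀ j : Fin n, ι (Pi.single j 1) ∈ W := by
      intro j
      rw [hb j]
      exact Subalgebra.sum_mem W fun i _ => Subalgebra.smul_mem W (haW i j) _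
    have hVsub : ∀ x : H, x ∈ V → x ∈ W := by
      intro x hx
      have hx2 : x = ι (b.equivFun ⟨x, hx⟩) := by
        show x = V.subtype (b.equivFun.symm (b.equivFun ⟨x, hx⟩))
        rw [LinearEquiv.symm_apply_apply]
        rfl
      rw [hx2]
      have hx3 : ι (b.equivFun ⟨x, hx⟩)
          = ∑ j, (b.equivFun ⟨x, hx⟩) j • ι (Pi.single j 1) := by
        conv_lhs => rw [pi_eq_sum_single_smul (b.equivFun ⟨x, hx⟩)]
        rw [map_sum]
        refine Finset.sum_congr rfl fun j _ => ?_
        rw [map_smul]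
      rw [hx3]
      exact Subalgebra.sum_mem W fun j _ => Subalgebra.smul_mem W (hbW j) _
    rw [hW, eq_top_iff, ← hS]
    apply Algebra.adjoin_le
    intro x hx
    exact hVsub x (hTV x (Finset.mem_insert_of_mem hx))
  exact ⟨n, hn1, ρ, a, sa.det, hcounit, hcoassoc, ha,
    IsUnit.of_mul_eq_one _ hdet, hdet, hgen⟩
end

section
/- Let k be an algebraically closed field and let H be a commutative Hopf algebra over k that is finitely generated as a k-algebra and whose prime spectrum is an irreducible topological space (equivalently, the nilradical of H is a prime ideal). Then the set of associated primes of H, regarded as a module over itself, is exactly { nilradical of H }; in particular, H has no embedded associated primes. -/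
noncomputable section TranslationMachinery

open Coalgebra TensorProduct HopfAlgebra

variable {k : Type*} {H : Type*} [CommRing k] [CommRing H] [HopfAlgebra k H]

/-- Left translation by a linear functional: `a ↦ ∑ ψ(a₁) • a₂`. -/
def hopfTl (ψ : H →ₗ[k] k) : H →ₗ[k] H :=
  (TensorProduct.lid k H).toLinearMap ∘ₗ ψ.rTensor H ∘ₗ (comul : H →ₗ[k] H ⊗[k] H)

lemma hopfTl_apply (ψ : H →ₗ[k] k) (a : H) (r : Coalgebra.Repr k a (H × H)) :
    hopfTl ψ a = ∑ i ∈ r.index, ψ (r.left i) • r.right i := by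
  simp only [hopfTl, LinearMap.comp_apply]
  rw [← r.eq]
  simp [map_sum]

lemma hopfTl_counit (a : H) : hopfTl (counit : H →ₗ[k] k) a = a := by
  simp [hopfTl, Coalgebra.rTensor_counit_comul]

lemma hopfTl_comp (ψ ψ' : H →ₗ[k] k) (a : H) :
    hopfTl ψ (hopfTl ψ' a) = hopfTl (ψ ∘ₗ hopfTl ψ') a := by
  classical
  set r := Coalgebra.Repr.arbitrary k a with hr
  set ll : (i : H × H) → Coalgebra.Repr k (r.left i) (H × H) :=
    fun i => Coalgebra.Repr.arbitrary k (r.left i) with hll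
  set rr : (i : H × H) → Coalgebra.Repr k (r.right i) (H × H) :=
    fun i => Coalgebra.Repr.arbitrary k (r.right i) with hrr
  have key := Coalgebra.sum_tmul_tmul_eq r ll rr
  -- apply the linear map x ⊗ (y ⊗ z) ↦ ψ' x • ψ y • z to both sides
  let Φ : H ⊗[k] (H ⊗[k] H) →ₗ[k] H :=
    (TensorProduct.lid k H).toLinearMap ∘ₗ
      (LinearMap.lTensor k (TensorProduct.lid k H).toLinearMap) ∘ₗ
        (TensorProduct.map ψ' (TensorProduct.map ψ LinearMap.id))
  have hΦ : ∀ (x y z : H), Φ (x ⊗ₜ[k] (y ⊗ₜ[k] z)) = ψ' x • ψ y • z := by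
    intro x y z
    simp only [Φ, LinearMap.comp_apply, TensorProduct.map_tmul, LinearMap.id_coe, id_eq,
      LinearMap.lTensor_tmul, LinearEquiv.coe_coe, TensorProduct.lid_tmul, map_smul]
    try rw [smul_comm]
  have key2 := congrArg Φ key
  simp only [map_sum, hΦ] at key2
  -- compute both sides
  have hL : hopfTl ψ (hopfTl ψ' a) =
      ∑ i ∈ r.index, ψ' (r.left i) • ∑ j ∈ (rr i).index,
        ψ ((rr i).left j) • (rr i).right j := by
    rw [hopfTl_apply ψ' a r, map_sum]
    refine Finset.sum_congr rfl fun i _ => ?_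
    rw [map_smul]
    try rw [hopfTl_apply ψ (r.right i) (rr i)]
  have hR : hopfTl (ψ ∘ₗ hopfTl ψ') a =
      ∑ i ∈ r.index, ∑ j ∈ (ll i).index,
        ψ' ((ll i).left j) • ψ ((ll i).right j) • r.right i := by
    rw [hopfTl_apply (ψ ∘ₗ hopfTl ψ') a r]
    refine Finset.sum_congr rfl fun i _ => ?_
    rw [LinearMap.comp_apply, hopfTl_apply ψ' (r.left i) (ll i), map_sum, Finset.sum_smul]
    refine Finset.sum_congr rfl fun j _ => ?_
    rw [map_smul, smul_assoc]
    try simp [smul_smul, mul_comm]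
  rw [hL, hR]
  have hL2 : ∑ i ∈ r.index, ψ' (r.left i) • ∑ j ∈ (rr i).index,
      ψ ((rr i).left j) • (rr i).right j =
      ∑ i ∈ r.index, ∑ j ∈ (rr i).index,
        ψ' (r.left i) • ψ ((rr i).left j) • (rr i).right j :=
    Finset.sum_congr rfl fun i _ => Finset.smul_sum
  exact hL2.trans key2.symm

variable (k) in
/-- Left translation by an algebra map, as an algebra map. -/
def hopfTa (φ : H →ₐ[k] k) : H →ₐ[k] H :=
  (Algebra.TensorProduct.lid k H).toAlgHom.comp
    ((Algebra.TensorProduct.map φ (AlgHom.id k H)).comp (Bialgebra.comulAlgHom k H))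

lemma hopfTa_apply (φ : H →ₐ[k] k) (a : H) : hopfTa k φ a = hopfTl φ.toLinearMap a := by
  have hr := (Coalgebra.Repr.arbitrary k a).eq
  rw [hopfTl_apply φ.toLinearMap a (Coalgebra.Repr.arbitrary k a)]
  simp only [hopfTa, AlgHom.comp_apply, Bialgebra.comulAlgHom_apply]
  rw [← hr]
  simp [map_sum, Algebra.TensorProduct.lid_tmul]

lemma counit_hopfTa (φ : H →ₐ[k] k) (a : H) :
    (counit : H →ₗ[k] k) (hopfTa k φ a) = φ a := by
  rw [hopfTa_apply]
  set r := Coalgebra.Repr.arbitrary k a with hrdef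
  rw [hopfTl_apply φ.toLinearMap a r, map_sum]
  have hc := Coalgebra.sum_tmul_counit_eq (R := k) (A := H) r
  have := congrArg (fun z => φ ((TensorProduct.rid k H).toLinearMap z)) hc
  simp only [map_sum, LinearEquiv.coe_coe, TensorProduct.rid_tmul, map_smul] at this
  simp only [TensorProduct.rid_tmul, one_smul] at this
  rw [← this]
  refine Finset.sum_congr rfl fun i _ => ?_
  simp [smul_eq_mul, mul_comm]

/-- The convolution inverse of an algebra map, as a linear map. -/
def hopfInv (φ : H →ₐ[k] k) : H →ₗ[k] k :=
  φ.toLinearMap ∘ₗ (antipode k : H →ₗ[k] H)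

lemma hopfInv_conv (φ : H →ₐ[k] k) (a : H) :
    (hopfInv φ ∘ₗ hopfTl φ.toLinearMap) a = (counit : H →ₗ[k] k) a := by
  set r := Coalgebra.Repr.arbitrary k a
  rw [LinearMap.comp_apply, hopfTl_apply φ.toLinearMap a r]
  have key := HopfAlgebra.sum_mul_antipode_eq_algebraMap_counit (R := k) (A := H) r
  have := congrArg φ key
  simp only [map_sum, map_mul, AlgHom.commutes, Algebra.algebraMap_self, RingHom.id_apply] at this
  rw [map_sum]
  simp only [hopfInv, LinearMap.comp_apply, map_smul, AlgHom.toLinearMap_apply]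
  calc ∑ i ∈ r.index, φ (r.left i) • φ (antipode (R := k) (r.right i))
      = ∑ i ∈ r.index, φ (r.left i * antipode (R := k) (r.right i)) := by
        refine Finset.sum_congr rfl fun i _ => ?_
        rw [map_mul, smul_eq_mul]
    _ = counit (R := k) a := by
        rw [← map_sum, key]
        simp

lemma conv_hopfInv (φ : H →ₐ[k] k) (a : H) :
    (φ.toLinearMap ∘ₗ hopfTl (hopfInv φ)) a = (counit : H →ₗ[k] k) a := by
  set r := Coalgebra.Repr.arbitrary k a
  rw [LinearMap.comp_apply, hopfTl_apply (hopfInv φ) a r]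
  have key := HopfAlgebra.sum_antipode_mul_eq_algebraMap_counit (R := k) (A := H) r
  rw [map_sum]
  calc ∑ i ∈ r.index, φ ((hopfInv φ) (r.left i) • r.right i)
      = ∑ i ∈ r.index, φ (antipode (R := k) (r.left i) * r.right i) := by
        refine Finset.sum_congr rfl fun i _ => ?_
        rw [map_smul, map_mul]
        simp [hopfInv, smul_eq_mul]
    _ = counit (R := k) a := by
        rw [← map_sum, key]
        simp

lemma hopfTa_leftInv (φ : H →ₐ[k] k) (a : H) :
    hopfTl (hopfInv φ) (hopfTa k φ a) = a := by
  rw [hopfTa_apply, hopfTl_comp]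
  have : (hopfInv φ ∘ₗ hopfTl φ.toLinearMap) = (counit : H →ₗ[k] k) :=
    LinearMap.ext (hopfInv_conv φ)
  rw [this, hopfTl_counit]

lemma hopfTa_rightInv (φ : H →ₐ[k] k) (a : H) :
    hopfTa k φ (hopfTl (hopfInv φ) a) = a := by
  rw [hopfTa_apply, hopfTl_comp]
  have : (φ.toLinearMap ∘ₗ hopfTl (hopfInv φ)) = (counit : H →ₗ[k] k) :=
    LinearMap.ext (conv_hopfInv φ)
  rw [this, hopfTl_counit]

variable (k) in
/-- Left translation by an algebra map, as an algebra automorphism. -/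
def hopfTe (φ : H →ₐ[k] k) : H ≃ₐ[k] H :=
  AlgEquiv.ofBijective (hopfTa k φ)
    ⟨Function.LeftInverse.injective (hopfTa_leftInv φ),
     Function.RightInverse.surjective (hopfTa_rightInv φ)⟩

lemma hopfTe_apply (φ : H →ₐ[k] k) (a : H) : hopfTe k φ a = hopfTa k φ a := rfl

/-- Transitivity: given two characters, there is an algebra automorphism intertwining them. -/
lemma exists_hopf_translation (χ₀ χ₁ : H →ₐ[k] k) :
    ∃ σ : H ≃ₐ[k] H, ∀ a, χ₁ (σ a) = χ₀ a := by
  refine ⟨(hopfTe k χ₀).trans (hopfTe k χ₁).symm, fun a => ?_⟩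
  have h1 : ∀ b, χ₁ ((hopfTe k χ₁).symm b) = (counit : H →ₗ[k] k) b := by
    intro b
    conv_rhs => rw [← (hopfTe k χ₁).apply_symm_apply b]
    rw [hopfTe_apply, counit_hopfTa]
  simp only [AlgEquiv.trans_apply]
  rw [h1, hopfTe_apply, counit_hopfTa]

end TranslationMachinery

section Points

variable {k : Type*} [Field k] [IsAlgClosed k]
variable {H : Type*} [CommRing H] [Algebra k H]

/-- Every maximal ideal of a finite type algebra over an algebraically closed field is the
kernel of a character. -/
lemma exists_character_of_isMaximal (hfg : Algebra.FiniteType k H)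
    (m : Ideal H) (hm : m.IsMaximal) :
    ∃ χ : H →ₐ[k] k, ∀ x, χ x = 0 ↔ x ∈ m := by
  haveI := hm
  letI : Field (H ⧸ m) := Ideal.Quotient.field m
  haveI : Algebra.FiniteType k (H ⧸ m) :=
    by haveI := hfg; exact (Algebra.FiniteType.of_surjective (Ideal.Quotient.mkₐ k m)
      (Ideal.Quotient.mkₐ_surjective k m))
  haveI : Module.Finite k (H ⧸ m) := finite_of_finite_type_of_isJacobsonRing k (H ⧸ m)
  have hsurj : Function.Surjective (algebraMap k (H ⧸ m)) :=
    IsAlgClosed.algebraMap_bijective_of_isIntegral.2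
  have hbij : Function.Bijective (Algebra.ofId k (H ⧸ m)) :=
    ⟨fun a b hab => (algebraMap k (H ⧸ m)).injective hab, hsurj⟩
  let e : k ≃ₐ[k] (H ⧸ m) := AlgEquiv.ofBijective (Algebra.ofId k (H ⧸ m)) hbij
  refine ⟨e.symm.toAlgHom.comp (Ideal.Quotient.mkₐ k m), fun x => ?_⟩
  rw [AlgHom.comp_apply]
  rw [show (Ideal.Quotient.mkₐ k m) x = Ideal.Quotient.mk m x from rfl]
  constructor
  · intro hx
    have h2 : Ideal.Quotient.mk m x = 0 := by
      have h3 := congrArg e hx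
      simpa using h3
    rwa [Ideal.Quotient.eq_zero_iff_mem] at h2
  · intro hx
    rw [Ideal.Quotient.eq_zero_iff_mem.mpr hx, map_zero]

end Points

/-- Let `k` be an algebraically closed field and `H` a commutative Hopf
algebra over `k` of finite type whose prime spectrum is irreducible.  Then the set of
associated primes of `H` (as a module over itself) is exactly `{nilradical H}`;
in particular `H` has no embedded associated primes. -/
theorem associatedPrimes_eq_nilradical_of_irreducible_hopfAlgebra
    (k : Type*) [Field k] [IsAlgClosed k]
    (H : Type*) [CommRing H] [HopfAlgebra k H]
    (hfg : Algebra.FiniteType k H)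
    (hirr : IrreducibleSpace (PrimeSpectrum H)) :
    associatedPrimes H H = {nilradical H} := by
  classical
  haveI := hfg
  haveI : IsNoetherianRing H := Algebra.FiniteType.isNoetherianRing k H
  haveI : IsJacobsonRing H := isJacobsonRing_of_finiteType (A := k)
  -- the nilradical is prime
  have hnil : (nilradical H).IsPrime := by
    have h1 : IsIrreducible (PrimeSpectrum.zeroLocus ((⊥ : Ideal H) : Set H)) := by
      rw [PrimeSpectrum.zeroLocus_bot]
      exact IrreducibleSpace.isIrreducible_univ _
    have h2 := (PrimeSpectrum.isIrreducible_zeroLocus_iff (⊥ : Ideal H)).mp h1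
    simpa [nilradical] using h2
  haveI := hnil
  -- H is nontrivial
  haveI : Nontrivial H := by
    refine ⟨1, 0, fun h => ?_⟩
    have := congrArg (Bialgebra.counitAlgHom k H) h
    simp only [map_one, map_zero] at this
    exact one_ne_zero this
  -- the kernel of the localization at the nilradical
  set K : Ideal H := RingHom.ker (algebraMap H (Localization.AtPrime (nilradical H))) with hKdef
  have hK : ∀ x : H, x ∈ K ↔ ∃ c, c ∉ nilradical H ∧ c * x = 0 := by
    intro x
    rw [hKdef, RingHom.mem_ker, IsLocalization.map_eq_zero_iff (nilradical H).primeCompl]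
    constructor
    · rintro ⟨⟨c, hc⟩, hcx⟩
      exact ⟨c, hc, hcx⟩
    · rintro ⟨c, hc, hcx⟩
      exact ⟨⟨c, hc⟩, hcx⟩
  by_cases hK0 : K = ⊥
  · -- ⊥ is a primary ideal, so the conclusion follows
    have hprim : (⊥ : Ideal H).IsPrimary := by
      rw [Ideal.isPrimary_iff]
      constructor
      · intro h
        have : (1 : H) ∈ (⊥ : Ideal H) := h ▸ Submodule.mem_top
        simp only [Ideal.mem_bot] at this
        exact one_ne_zero this
      · intro x y hxy
        by_cases hy : y ∈ (⊥ : Ideal H).radical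
        · exact Or.inr hy
        · left
          have hynil : y ∉ nilradical H := by
            simpa only [nilradical, Ideal.zero_eq_bot] using hy
          have hxK : x ∈ K := (hK x).mpr ⟨y, hynil, by
            rw [mul_comm]; simpa [Ideal.mem_bot] using hxy⟩
          rw [hK0] at hxK
          exact hxK
    have hsing := associatedPrimes.eq_singleton_of_isPrimary hprim
    have heq : associatedPrimes H (H ⧸ (⊥ : Ideal H)) = associatedPrimes H H :=
      LinearEquiv.AssociatedPrimes.eq (Submodule.quotEquivOfEqBot (⊥ : Ideal H) rfl)
    rw [← heq, hsing]
    have : (⊥ : Ideal H).radical = nilradical H := rfl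
    rw [this]
  · -- otherwise, derive a contradiction using translation
    exfalso
    -- the annihilator of K
    set A : Ideal H := (K : Submodule H H).annihilator with hAdef
    -- K is finitely generated, so A contains a non-nilpotent element
    obtain ⟨s, hs⟩ : (K : Submodule H H).FG := IsNoetherian.noetherian _
    have hgen : ∀ x ∈ s, ∃ c, c ∉ nilradical H ∧ c * x = 0 := by
      intro x hx
      exact (hK x).mp (hs ▸ Submodule.subset_span hx)
    choose cf hcf1 hcf2 using hgen
    set c : H := ∏ x ∈ s.attach, cf x.1 x.2 with hcdef
    have hcnil : c ∉ nilradical H := by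
      intro hc
      obtain ⟨⟨x, hx⟩, -, hcx⟩ := (Ideal.IsPrime.prod_mem_iff.mp hc)
      exact hcf1 x hx hcx
    have hcA : c ∈ A := by
      rw [hAdef, Submodule.mem_annihilator]
      intro n hn
      rw [← hs] at hn
      induction hn using Submodule.span_induction with
      | mem x hx =>
        obtain ⟨e, he⟩ := Finset.dvd_prod_of_mem (fun y : {z // z ∈ s} => cf y.1 y.2)
          (Finset.mem_attach s ⟨x, hx⟩)
        rw [smul_eq_mul, hcdef, he, mul_right_comm, hcf2 x hx, zero_mul]
      | zero => simp
      | add x y _ _ hx hy => rw [smul_add, hx, hy, add_zero]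
      | smul a x _ hx => rw [smul_comm, hx, smul_zero]
    -- A is a proper ideal
    have hA_ne_top : A ≠ ⊤ := by
      intro h
      exact hK0 (by simpa using Submodule.annihilator_eq_top_iff.mp h)
    obtain ⟨m₀, hm₀, hAm₀⟩ := Ideal.exists_le_maximal A hA_ne_top
    -- a maximal ideal avoiding c
    have hcjac : c ∉ (nilradical H).jacobson := by
      rw [← Ideal.radical_eq_jacobson]
      simpa only [nilradical, Ideal.zero_eq_bot, Ideal.radical_idem] using hcnil
    obtain ⟨m₁, hm₁mem, hcm₁⟩ : ∃ J, (nilradical H ≤ J ∧ J.IsMaximal) ∧ c ∉ J := by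
      by_contra h
      push_neg at h
      exact hcjac (Ideal.mem_sInf.mpr fun J hJ => h J hJ)
    obtain ⟨hm₁le, hm₁⟩ := hm₁mem
    -- characters
    obtain ⟨χ₀, hχ₀⟩ := exists_character_of_isMaximal hfg m₀ hm₀
    obtain ⟨χ₁, hχ₁⟩ := exists_character_of_isMaximal hfg m₁ hm₁
    -- translation automorphism
    obtain ⟨σ, hσ⟩ := exists_hopf_translation χ₀ χ₁
    -- K is invariant under all algebra automorphisms
    have hKinv : ∀ (τ : H ≃ₐ[k] H), ∀ x ∈ K, τ x ∈ K := by
      intro τ x hx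
      obtain ⟨d, hd1, hd2⟩ := (hK x).mp hx
      refine (hK (τ x)).mpr ⟨τ d, ?_, ?_⟩
      · intro hτd
        apply hd1
        rw [mem_nilradical] at hτd ⊢
        obtain ⟨n, hn⟩ := hτd
        exact ⟨n, by
          apply τ.injective
          rw [map_pow, hn, map_zero]⟩
      · rw [← map_mul, hd2, map_zero]
    -- hence so is A
    have hAinv : ∀ (τ : H ≃ₐ[k] H), ∀ a ∈ A, τ a ∈ A := by
      intro τ a ha
      rw [hAdef, Submodule.mem_annihilator] at ha ⊢
      intro y hy
      have h1 : τ.symm y ∈ K := hKinv τ.symm y hy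
      have h2 : a * τ.symm y = 0 := ha _ h1
      calc τ a • y = τ a * τ (τ.symm y) := by rw [τ.apply_symm_apply, smul_eq_mul]
        _ = τ (a * τ.symm y) := by rw [map_mul]
        _ = 0 := by rw [h2, map_zero]
    -- transport: c ∈ A ⊆ m₀, and σ carries m₀ into m₁
    have hm₀m₁ : ∀ x ∈ m₀, σ x ∈ m₁ := by
      intro x hx
      rw [← hχ₁ (σ x), hσ x, hχ₀ x]
      exact hx
    have : c ∈ m₁ := by
      have h1 : σ.symm c ∈ A := hAinv σ.symm c hcA
      have h2 : σ.symm c ∈ m₀ := hAm₀ h1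
      have h3 := hm₀m₁ _ h2
      rwa [σ.apply_symm_apply] at h3
    exact hcm₁ this
end

section
/- Let A be a Dedekind domain with fraction field K, and let B be a commutative A-algebra that is flat as an A-module and finitely generated as an A-algebra. If the prime spectrum of B ⊗[A] K is an irreducible topological space, then the prime spectrum of B is an irreducible topological space (equivalently, the nilradical of B is a prime ideal). -/
open TensorProduct

/-- Let `A` be a Dedekind domain with fraction field `K`, and let `B` be a
flat, finite-type commutative `A`-algebra.  If the prime spectrum of `B ⊗[A] K` is
irreducible, then so is the prime spectrum of `B`. -/
theorem irreducibleSpace_of_irreducibleSpace_genericFiber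
    (A : Type*) [CommRing A] [IsDomain A] [IsDedekindDomain A]
    (B : Type*) [CommRing B] [Algebra A B] [Module.Flat A B]
    (hfg : Algebra.FiniteType A B)
    (h : IrreducibleSpace (PrimeSpectrum (B ⊗[A] FractionRing A))) :
    IrreducibleSpace (PrimeSpectrum B) := by
  set K := FractionRing A
  set f := algebraMap B (B ⊗[A] K)
  have hinj : Function.Injective f := by
    have h1 : Function.Injective
        (LinearMap.lTensor B (Algebra.linearMap A K)) :=
      Module.Flat.lTensor_preserves_injective_linearMap _
        (IsFractionRing.injective A K)
    have h2 : ∀ b : B, f b =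
        (LinearMap.lTensor B (Algebra.linearMap A K)) ((TensorProduct.rid A B).symm b) := by
      intro b
      simp [f, Algebra.TensorProduct.algebraMap_apply, TensorProduct.rid_symm_apply]
      rfl
    intro x y hxy
    rw [h2 x, h2 y] at hxy
    exact (TensorProduct.rid A B).symm.injective (h1 hxy)
  have hdense : DenseRange (PrimeSpectrum.comap f) := by
    rw [PrimeSpectrum.denseRange_comap_iff_ker_le_nilRadical]
    rw [(RingHom.injective_iff_ker_eq_bot f).mp hinj]
    exact bot_le
  have hirr : IsIrreducible (Set.range (PrimeSpectrum.comap f)) := by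
    have := (IrreducibleSpace.isIrreducible_univ (PrimeSpectrum (B ⊗[A] K))).image
      (PrimeSpectrum.comap f) (PrimeSpectrum.continuous_comap f).continuousOn
    simpa [Set.image_univ] using this
  rw [irreducibleSpace_def]
  have := hirr.closure
  rwa [hdense.closure_range] at this
end
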